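/- Orbits of the octagon Farey map escape the parabolic sectors: for every u ∈ (1, 1+√2) there exists n ≥ 1 with Fⁿ(u) ∉ Σ₁, and for every u ∈ (-∞, -1-√2] there exists n ≥ 1 with Fⁿ(u) ∉ Σ₇. Consequently the first-exit times n₁ and n₇ used to define the octagon Gauss map are finite everywhere except at the parabolic fixed point u = 1+√2. -/

import Mathlib

open MeasureTheory Set

noncomputable section

/-- The linear fractional transformation of `ℝ` induced by a 2×2 real matrix,
with the convention that the value is `0` when the denominator vanishes. -/
def mob (M : Matrix (Fin 2) (Fin 2) ℝ) (u : ℝ) : ℝ :=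
  (M 0 0 * u + M 0 1) / (M 1 0 * u + M 1 1)

/-- The matrix `γ = [[-1, 2+2√2],[0,1]]`. -/
def gam : Matrix (Fin 2) (Fin 2) ℝ := !![-1, 2 + 2 * Real.sqrt 2; 0, 1]

/-- The isometries `ν₁, …, ν₇` of the octagon. -/
def nu : ℕ → Matrix (Fin 2) (Fin 2) ℝ
  | 1 => (Real.sqrt 2)⁻¹ • !![1, 1; 1, -1]
  | 2 => (Real.sqrt 2)⁻¹ • !![1, 1; -1, 1]
  | 3 => !![0, 1; 1, 0]
  | 4 => !![0, 1; -1, 0]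
  | 5 => (Real.sqrt 2)⁻¹ • !![-1, 1; 1, 1]
  | 6 => (Real.sqrt 2)⁻¹ • !![-1, 1; -1, -1]
  | 7 => !![-1, 0; 0, 1]
  | _ => 1

/-- The index `i` of the sector `Σᵢ` (in inverse-slope coordinates) containing `u`:
`Σ₀ = (1+√2, ∞)`, `Σ₁ = (1, 1+√2]`, `Σ₂ = (√2-1, 1]`, `Σ₃ = (0, √2-1]`, `Σ₄ = (1-√2, 0]`,
`Σ₅ = (-1, 1-√2]`, `Σ₆ = (-1-√2, -1]`, `Σ₇ = (-∞, -1-√2]`. -/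
def sectorIndex (u : ℝ) : ℕ :=
  if 1 + Real.sqrt 2 < u then 0
  else if 1 < u then 1
  else if Real.sqrt 2 - 1 < u then 2
  else if 0 < u then 3
  else if 1 - Real.sqrt 2 < u then 4
  else if -1 < u then 5
  else if -(1 + Real.sqrt 2) < u then 6
  else 7

/-- The octagon Farey map in inverse-slope coordinates: `F(u) = (γ·νᵢ)[u]` for `u ∈ Σᵢ`
(`i = 1,…,7`), and `F(u) = u` for `u ∈ Σ₀`. -/
def F (u : ℝ) : ℝ :=
  if sectorIndex u = 0 then u else mob (gam * nu (sectorIndex u)) u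

lemma one_lt_sqrt2 : (1 : ℝ) < Real.sqrt 2 := by
  nlinarith [Real.sq_sqrt (show (0:ℝ) ≤ 2 by norm_num), Real.sqrt_nonneg 2]

lemma sq_sqrt2 : Real.sqrt 2 ^ 2 = 2 := by
  rw [sq]; exact Real.mul_self_sqrt (by norm_num)

lemma F_sector1 (u : ℝ) (h1 : 1 < u) (h2 : u ≤ 1 + Real.sqrt 2) :
    F u = ((1 + 2*Real.sqrt 2) * u - (3 + 2*Real.sqrt 2)) / (u - 1) := by
  have hidx : sectorIndex u = 1 := by
    unfold sectorIndex
    rw [if_neg (not_lt.2 h2), if_pos h1]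
  have hs : Real.sqrt 2 ≠ 0 := by positivity
  rw [F, hidx]
  norm_num
  simp [mob, gam, nu, Matrix.mul_apply, Fin.sum_univ_two, Matrix.smul_apply]
  rw [show (-(Real.sqrt 2)⁻¹ + (2 + 2 * Real.sqrt 2) * (Real.sqrt 2)⁻¹) * u +
      (-(Real.sqrt 2)⁻¹ + -((2 + 2 * Real.sqrt 2) * (Real.sqrt 2)⁻¹)) =
      (Real.sqrt 2)⁻¹ * ((1 + 2 * Real.sqrt 2) * u - (3 + 2 * Real.sqrt 2)) from by ring,
    show (Real.sqrt 2)⁻¹ * u + -(Real.sqrt 2)⁻¹ = (Real.sqrt 2)⁻¹ * (u - 1) from by ring,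
    mul_div_mul_left _ _ (inv_ne_zero hs)]

lemma F_sector7 (u : ℝ) (h : u ≤ -(1 + Real.sqrt 2)) :
    F u = u + (2 + 2*Real.sqrt 2) := by
  have hs := one_lt_sqrt2
  have hidx : sectorIndex u = 7 := by
    unfold sectorIndex
    rw [if_neg (by linarith), if_neg (by linarith), if_neg (by linarith),
      if_neg (by linarith), if_neg (by linarith), if_neg (by linarith),
      if_neg (not_lt.2 h)]
  rw [F, hidx]
  norm_num
  simp [mob, gam, nu, Matrix.mul_apply, Fin.sum_univ_two]

lemma aux7 : ∀ m : ℕ, ∀ u : ℝ, u ≤ -(1 + Real.sqrt 2) →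
    -(1 + Real.sqrt 2) - u ≤ m * (2 + 2 * Real.sqrt 2) →
    ∃ n, 1 ≤ n ∧ F^[n] u ∉ Set.Iic (-(1 + Real.sqrt 2)) := by
  have hs := one_lt_sqrt2
  intro m
  induction m with
  | zero =>
    intro u hu hb
    refine ⟨1, le_refl _, ?_⟩
    simp only [Function.iterate_one, Set.mem_Iic]
    rw [F_sector7 u hu]
    push_neg
    simp only [Nat.cast_zero, zero_mul] at hb
    linarith
  | succ m ih =>
    intro u hu hb
    by_cases h : F u ≤ -(1 + Real.sqrt 2)
    · have hb' : -(1 + Real.sqrt 2) - F u ≤ m * (2 + 2 * Real.sqrt 2) := by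
        rw [F_sector7 u hu]
        push_cast at hb ⊢
        linarith
      obtain ⟨n, hn, hout⟩ := ih (F u) h hb'
      exact ⟨n + 1, by omega, by rwa [Function.iterate_succ_apply]⟩
    · exact ⟨1, le_refl _, by simpa using h⟩

lemma aux1 : ∀ m : ℕ, ∀ u : ℝ, 1 < u → u < 1 + Real.sqrt 2 →
    1 / (1 + Real.sqrt 2 - u) ≤ (m + 1) / Real.sqrt 2 →
    ∃ n, 1 ≤ n ∧ F^[n] u ∉ Set.Ioc (1 : ℝ) (1 + Real.sqrt 2) := by
  have hs := one_lt_sqrt2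
  have hs2 := sq_sqrt2
  intro m
  induction m with
  | zero =>
    intro u h1 h2 hb
    exfalso
    have hpos : (0:ℝ) < 1 + Real.sqrt 2 - u := by linarith
    have h0 : Real.sqrt 2 ≤ 1 + Real.sqrt 2 - u := by
      simp only [Nat.cast_zero, zero_add] at hb
      rw [div_le_div_iff₀ hpos (by linarith)] at hb
      nlinarith
    linarith
  | succ m ih =>
    intro u h1 h2 hb
    by_cases h : F u ∈ Set.Ioc (1 : ℝ) (1 + Real.sqrt 2)
    · have hF := F_sector1 u h1 (le_of_lt h2)
      have hu1 : u - 1 ≠ 0 := by linarith [h1]; 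
      have key : 1 + Real.sqrt 2 - F u = Real.sqrt 2 * (1 + Real.sqrt 2 - u) / (u - 1) := by
        rw [hF]
        field_simp
        ring_nf
        nlinarith [sq_sqrt2]
      have hpos : (0:ℝ) < 1 + Real.sqrt 2 - F u := by
        rw [key]
        apply div_pos (by nlinarith) (by linarith)
      have hw : 1 / (1 + Real.sqrt 2 - F u) = 1 / (1 + Real.sqrt 2 - u) - 1 / Real.sqrt 2 := by
        rw [key]
        have h3 : (0:ℝ) < 1 + Real.sqrt 2 - u := by linarith
        field_simp
        ring_nf
      have hb' : 1 / (1 + Real.sqrt 2 - F u) ≤ (m + 1) / Real.sqrt 2 := by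
        rw [hw]
        push_cast at hb ⊢
        have : ((m:ℝ) + 1 + 1) / Real.sqrt 2 - 1 / Real.sqrt 2 = (m + 1) / Real.sqrt 2 := by
          field_simp
          ring
        linarith [hb, this.symm.le]
      obtain ⟨n, hn, hout⟩ := ih (F u) h.1 (by linarith : F u < 1 + Real.sqrt 2) hb'
      exact ⟨n + 1, by omega, by rwa [Function.iterate_succ_apply]⟩
    · exact ⟨1, le_refl _, by simpa using h⟩

theorem farey_escapes_parabolic_sectors :
    (∀ u ∈ Set.Ioo (1 : ℝ) (1 + Real.sqrt 2),
      ∃ n, 1 ≤ n ∧ F^[n] u ∉ Set.Ioc (1 : ℝ) (1 + Real.sqrt 2)) ∧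
    (∀ u ∈ Set.Iic (-(1 + Real.sqrt 2)),
      ∃ n, 1 ≤ n ∧ F^[n] u ∉ Set.Iic (-(1 + Real.sqrt 2))) := by
  have hs := one_lt_sqrt2
  constructor
  · rintro u ⟨h1, h2⟩
    obtain ⟨m, hm⟩ := exists_nat_ge (Real.sqrt 2 / (1 + Real.sqrt 2 - u))
    refine aux1 m u h1 h2 ?_
    have hpos : (0:ℝ) < 1 + Real.sqrt 2 - u := by linarith
    rw [div_le_div_iff₀ hpos (by linarith)]
    rw [div_le_iff₀ hpos] at hm
    push_cast
    nlinarith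
  · intro u hu
    obtain ⟨m, hm⟩ := exists_nat_ge ((-(1 + Real.sqrt 2) - u) / (2 + 2 * Real.sqrt 2))
    refine aux7 m u hu ?_
    rw [div_le_iff₀ (by linarith)] at hm
    linarith
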